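/- Let a>0, α,β∈ℝ and k∈ℂ with k≠0. Assume (k²−α²−β²)·sin(2ka) − 2βk·cos(2ka) = 0 and k·cos(ka)+(iα+β)·sin(ka) ≠ 0. Then the function ψ(x) := cos(kx) + ((k·sin(ka) − (iα+β)·cos(ka)) / (k·cos(ka) + (iα+β)·sin(ka)))·sin(kx) satisfies −ψ″(x)=k²ψ(x) for all x∈[-a,a], ψ′(a)+(iα+β)ψ(a)=0 and ψ′(−a)+(iα−β)ψ(−a)=0, and ψ(0)=1, so ψ is not identically zero. -/

import Mathlib

/-- the explicit eigenfunction of the zero-curvature PT-symmetric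
Robin problem corresponding to the eigenvalue `λ = k²`. -/
theorem pt_zero_curvature_eigenfunction
    (a α β : ℝ) (ha : 0 < a) (k : ℂ) (hk : k ≠ 0)
    (heq : (k ^ 2 - (α : ℂ) ^ 2 - (β : ℂ) ^ 2) * Complex.sin (2 * k * (a : ℂ))
      - 2 * (β : ℂ) * k * Complex.cos (2 * k * (a : ℂ)) = 0)
    (hden : k * Complex.cos (k * (a : ℂ))
      + (Complex.I * (α : ℂ) + (β : ℂ)) * Complex.sin (k * (a : ℂ)) ≠ 0)
    (ψ : ℝ → ℂ)
    (hψ : ψ = fun x : ℝ => Complex.cos (k * (x : ℂ))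
      + ((k * Complex.sin (k * (a : ℂ))
            - (Complex.I * (α : ℂ) + (β : ℂ)) * Complex.cos (k * (a : ℂ)))
          / (k * Complex.cos (k * (a : ℂ))
            + (Complex.I * (α : ℂ) + (β : ℂ)) * Complex.sin (k * (a : ℂ))))
        * Complex.sin (k * (x : ℂ))) :
    (∀ x ∈ Set.Icc (-a) a, -deriv (deriv ψ) x = k ^ 2 * ψ x) ∧
    deriv ψ a + (Complex.I * (α : ℂ) + (β : ℂ)) * ψ a = 0 ∧
    deriv ψ (-a) + (Complex.I * (α : ℂ) - (β : ℂ)) * ψ (-a) = 0 ∧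
    ψ 0 = 1 := by
  subst hψ
  set μ : ℂ := Complex.I * (α:ℂ) + (β:ℂ) with hμ
  set C : ℂ := (k * Complex.sin (k*(a:ℂ)) - μ * Complex.cos (k*(a:ℂ)))
      / (k * Complex.cos (k*(a:ℂ)) + μ * Complex.sin (k*(a:ℂ))) with hC
  have hcos : ∀ x : ℝ, HasDerivAt (fun x:ℝ => Complex.cos (k*(x:ℂ))) (-Complex.sin (k*(x:ℂ))*k) x := by
    intro x
    have h1 : HasDerivAt (fun z:ℂ => Complex.cos (k*z)) (-Complex.sin (k*(x:ℂ))*k) (x:ℂ) := by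
      simpa [Function.comp_def] using (Complex.hasDerivAt_cos (k*(x:ℂ))).comp (x:ℂ) ((hasDerivAt_id (x:ℂ)).const_mul k)
    exact h1.comp_ofReal
  have hsin : ∀ x : ℝ, HasDerivAt (fun x:ℝ => Complex.sin (k*(x:ℂ))) (Complex.cos (k*(x:ℂ))*k) x := by
    intro x
    have h1 : HasDerivAt (fun z:ℂ => Complex.sin (k*z)) (Complex.cos (k*(x:ℂ))*k) (x:ℂ) := by
      simpa [Function.comp_def] using (Complex.hasDerivAt_sin (k*(x:ℂ))).comp (x:ℂ) ((hasDerivAt_id (x:ℂ)).const_mul k)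
    exact h1.comp_ofReal
  have hd : ∀ x : ℝ, HasDerivAt (fun x:ℝ => Complex.cos (k*(x:ℂ)) + C * Complex.sin (k*(x:ℂ)))
      (-Complex.sin (k*(x:ℂ))*k + C*(Complex.cos (k*(x:ℂ))*k)) x :=
    fun x => (hcos x).add ((hsin x).const_mul C)
  have hderiv : deriv (fun x:ℝ => Complex.cos (k*(x:ℂ)) + C * Complex.sin (k*(x:ℂ)))
      = fun x:ℝ => -Complex.sin (k*(x:ℂ))*k + C*(Complex.cos (k*(x:ℂ))*k) :=
    funext fun x => (hd x).deriv
  have hd2 : ∀ x : ℝ, HasDerivAt (fun x:ℝ => -Complex.sin (k*(x:ℂ))*k + C*(Complex.cos (k*(x:ℂ))*k))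
      (-(Complex.cos (k*(x:ℂ))*k)*k + C*(-Complex.sin (k*(x:ℂ))*k*k)) x := by
    intro x
    have := (((hsin x).neg).mul_const k).add (((hcos x).mul_const k).const_mul C)
    simpa [mul_assoc, Pi.add_def] using this
  have hsa : Complex.sin (k*((-a:ℝ):ℂ)) = -Complex.sin (k*(a:ℂ)) := by
    push_cast; rw [mul_neg, Complex.sin_neg]
  have hca : Complex.cos (k*((-a:ℝ):ℂ)) = Complex.cos (k*(a:ℂ)) := by
    push_cast; rw [mul_neg, Complex.cos_neg]
  have heq' : (k ^ 2 - (α : ℂ) ^ 2 - (β : ℂ) ^ 2) * (2 * Complex.sin (k*(a:ℂ)) * Complex.cos (k*(a:ℂ)))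
      - 2 * (β : ℂ) * k * (Complex.cos (k*(a:ℂ))^2 - Complex.sin (k*(a:ℂ))^2) = 0 := by
    have h2 : (2 : ℂ) * k * (a:ℂ) = 2 * (k * a) := by ring
    rw [h2, Complex.sin_two_mul, Complex.cos_two_mul] at heq
    have hsc := Complex.sin_sq_add_cos_sq (k*(a:ℂ))
    linear_combination heq + (2*(β:ℂ)*k) * hsc
  refine ⟨?_, ?_, ?_, ?_⟩
  · intro x _
    rw [hderiv, (hd2 x).deriv]
    ring
  · rw [hderiv]
    simp only
    rw [hC]
    have hden2 : k * Complex.cos (k*(a:ℂ)) + Complex.sin (k*(a:ℂ)) * μ ≠ 0 := by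
      rw [mul_comm (Complex.sin _)]; exact hden
    field_simp
    ring
  · rw [hderiv]
    simp only
    rw [hsa, hca, hC]
    have hden2 : k * Complex.cos (k*(a:ℂ)) + Complex.sin (k*(a:ℂ)) * μ ≠ 0 := by
      rw [mul_comm (Complex.sin _)]; exact hden
    field_simp
    linear_combination heq' + 2*Complex.sin (k*(a:ℂ))*Complex.cos (k*(a:ℂ))*(α:ℂ)^2*Complex.I_sq
  · simp
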